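/- Fix n ∈ ℕ with n ≥ 1 and real parameters a, b, α, β with (a−b+1|q)_n (2a−β+1|q)_n (a−b−α+1|q)_n ≠ 0. Then for every real s: [n]_q [2s+1]_q · ũ_n^{α,β}(x(s),a,b)_q = σ̃(−s−1) · ũ_{n−1}^{α,β}(x(s+1/2), a+1/2, b−1/2)_q − σ̃(s) · ũ_{n−1}^{α,β}(x(s−1/2), a+1/2, b−1/2)_q. -/

import Mathlib

open Finset

/-- The symmetric q-number `[s]_q = (q^{s/2} - q^{-s/2})/(q^{1/2} - q^{-1/2})`. -/
noncomputable def qnum (q s : ℝ) : ℝ :=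
  (q ^ (s / 2) - q ^ (-s / 2)) / (q ^ ((1 : ℝ) / 2) - q ^ (-(1 : ℝ) / 2))

/-- The symmetric q-factorial `[n]_q! = ∏_{m=1}^n [m]_q`. -/
noncomputable def qfact (q : ℝ) (n : ℕ) : ℝ :=
  ∏ m ∈ Finset.range n, qnum q ((m : ℝ) + 1)

/-- The symmetric q-Pochhammer symbol `(a|q)_k = ∏_{m=0}^{k-1} [a+m]_q`. -/
noncomputable def qpoch (q a : ℝ) (k : ℕ) : ℝ :=
  ∏ m ∈ Finset.range k, qnum q (a + (m : ℝ))

/-- The q-Racah polynomial `u_n^{α,β}(x(s),a,b)_q` on the lattice `x(s)=[s]_q[s+1]_q`. -/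
noncomputable def racahU (q a b α β : ℝ) (n : ℕ) (s : ℝ) : ℝ :=
  qpoch q (a - b + 1) n * qpoch q (β + 1) n * qpoch q (a + b + α + 1) n / qfact q n *
    ∑ k ∈ Finset.range (n + 1),
      qpoch q (-(n : ℝ)) k * qpoch q (α + β + (n : ℝ) + 1) k * qpoch q (a - s) k *
          qpoch q (a + s + 1) k /
        (qpoch q 1 k * qpoch q (a - b + 1) k * qpoch q (β + 1) k *
          qpoch q (a + b + α + 1) k)

/-- The alternative q-Racah polynomial `ũ_n^{α,β}(x(s),a,b)_q`. -/
noncomputable def racahUt (q a b α β : ℝ) (n : ℕ) (s : ℝ) : ℝ :=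
  qpoch q (a - b + 1) n * qpoch q (2 * a - β + 1) n * qpoch q (a - b - α + 1) n / qfact q n *
    ∑ k ∈ Finset.range (n + 1),
      qpoch q (-(n : ℝ)) k * qpoch q (2 * a - 2 * b - α - β + (n : ℝ) + 1) k *
          qpoch q (a - s) k * qpoch q (a + s + 1) k /
        (qpoch q 1 k * qpoch q (a - b + 1) k * qpoch q (2 * a - β + 1) k *
          qpoch q (a - b - α + 1) k)

/-- `σ(s) = [s-a]_q [s+b]_q [s+a-β]_q [b+α-s]_q`. -/
noncomputable def racahSigma (q a b α β s : ℝ) : ℝ :=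
  qnum q (s - a) * qnum q (s + b) * qnum q (s + a - β) * qnum q (b + α - s)

/-- `σ(-s-1) = [s+a+1]_q [b-s-1]_q [s-a+β+1]_q [b+α+s+1]_q`. -/
noncomputable def racahSigmaM (q a b α β s : ℝ) : ℝ :=
  qnum q (s + a + 1) * qnum q (b - s - 1) * qnum q (s - a + β + 1) * qnum q (b + α + s + 1)

/-- `σ̃(s) = [s-a]_q [s+b]_q [s-a+β]_q [b+α+s]_q`. -/
noncomputable def racahSigmaT (q a b α β s : ℝ) : ℝ :=
  qnum q (s - a) * qnum q (s + b) * qnum q (s - a + β) * qnum q (b + α + s)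

/-- `σ̃(-s-1) = [s+a+1]_q [b-s-1]_q [s+a-β+1]_q [b+α-s-1]_q`. -/
noncomputable def racahSigmaTM (q a b α β s : ℝ) : ℝ :=
  qnum q (s + a + 1) * qnum q (b - s - 1) * qnum q (s + a - β + 1) * qnum q (b + α - s - 1)

/-- `τ_n(s)` for the q-Racah polynomials. -/
noncomputable def racahTau (q a b α β : ℝ) (n : ℕ) (s : ℝ) : ℝ :=
  -qnum q (α + β + 2 * (n : ℝ) + 2) * qnum q (s + (n : ℝ) / 2) * qnum q (s + (n : ℝ) / 2 + 1) +
    qnum q (a + (n : ℝ) / 2 + 1) * qnum q (b - (n : ℝ) / 2 - 1) *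
      qnum q (β + (n : ℝ) / 2 + 1 - a) * qnum q (b + α + (n : ℝ) / 2 + 1) -
    qnum q (a + (n : ℝ) / 2) * qnum q (b - (n : ℝ) / 2) * qnum q (β + (n : ℝ) / 2 - a) *
      qnum q (b + α + (n : ℝ) / 2)


noncomputable def ee (q x : ℝ) : ℝ := q ^ (x / 2)

section EE
variable {q : ℝ}

lemma ee_pos (hq0 : 0 < q) (x : ℝ) : 0 < ee q x := Real.rpow_pos_of_pos hq0 _
lemma ee_ne (hq0 : 0 < q) (x : ℝ) : ee q x ≠ 0 := (ee_pos hq0 x).ne'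
lemma ee_add (hq0 : 0 < q) (x y : ℝ) : ee q (x + y) = ee q x * ee q y := by
  unfold ee; rw [add_div, Real.rpow_add hq0]
lemma ee_neg (hq0 : 0 < q) (x : ℝ) : ee q (-x) = (ee q x)⁻¹ := by
  unfold ee; rw [neg_div, Real.rpow_neg hq0.le]
lemma ee_sub (hq0 : 0 < q) (x y : ℝ) : ee q (x - y) = ee q x / ee q y := by
  rw [sub_eq_add_neg, ee_add hq0, ee_neg hq0, div_eq_mul_inv]
lemma ee_two_mul (hq0 : 0 < q) (x : ℝ) : ee q (2 * x) = ee q x * ee q x := by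
  rw [two_mul, ee_add hq0]
lemma ee_two (hq0 : 0 < q) : ee q 2 = ee q 1 * ee q 1 := by
  rw [show (2:ℝ) = 1 + 1 by norm_num, ee_add hq0]
lemma ee_sq (hq0 : 0 < q) : ee q 1 * ee q 1 = q := by
  rw [← ee_add hq0]; unfold ee; norm_num
lemma ee_mul_self (hq0 : 0 < q) (x : ℝ) : ee q x * ee q x = q ^ x := by
  rw [← ee_add hq0]; unfold ee; rw [add_self_div_two]
lemma qden_ne (hq0 : 0 < q) (hq1 : q ≠ 1) : ee q 1 - (ee q 1)⁻¹ ≠ 0 := by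
  intro h
  have h1 : ee q 1 = (ee q 1)⁻¹ := by linarith [sub_eq_zero.mp h]
  have : q = 1 := by
    rw [← ee_sq hq0]; nth_rewrite 2 [h1]
    exact mul_inv_cancel₀ (ee_ne hq0 1)
  exact hq1 this
lemma qnum_eq (hq0 : 0 < q) (x : ℝ) :
    qnum q x = (ee q x - (ee q x)⁻¹) / (ee q 1 - (ee q 1)⁻¹) := by
  unfold qnum ee
  rw [neg_div, Real.rpow_neg hq0.le, neg_div, Real.rpow_neg hq0.le]
lemma nn_eq (hq0 : 0 < q) (x : ℝ) :
    ee q x - (ee q x)⁻¹ = (ee q x * ee q x - 1) / ee q x := by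
  have h := ee_ne hq0 x
  field_simp
lemma qnum_eq2 (hq0 : 0 < q) (x : ℝ) :
    qnum q x = (ee q x * ee q x - 1) / ee q x *
      ((ee q 1 * ee q 1 - 1) / ee q 1)⁻¹ := by
  rw [qnum_eq hq0, nn_eq hq0, nn_eq hq0, div_eq_mul_inv]

lemma qnum_zero : qnum q 0 = 0 := by unfold qnum; norm_num
lemma qnum_neg (hq0 : 0 < q) (x : ℝ) : qnum q (-x) = -qnum q x := by
  rw [qnum_eq hq0, qnum_eq hq0, ee_neg hq0, inv_inv, ← neg_div, neg_sub]
lemma qnum_ne (hq0 : 0 < q) (hq1 : q ≠ 1) {x : ℝ} (hx : x ≠ 0) : qnum q x ≠ 0 := by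
  rw [qnum_eq hq0]
  intro h
  rcases div_eq_zero_iff.mp h with h' | h'
  · have h2 : ee q x = (ee q x)⁻¹ := by linarith [sub_eq_zero.mp h']
    have h3 : q ^ x = 1 := by
      rw [← ee_mul_self hq0]; nth_rewrite 2 [h2]
      exact mul_inv_cancel₀ (ee_ne hq0 x)
    rw [Real.rpow_def_of_pos hq0, Real.exp_eq_one_iff] at h3
    rcases mul_eq_zero.mp h3 with h4 | h4
    · exact hq1 (by
        have := Real.exp_log hq0
        rw [h4, Real.exp_zero] at this; exact this.symm)
    · exact hx h4
  · exact qden_ne hq0 hq1 h'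

end EE

section Poch
variable {q : ℝ}

lemma qpoch_zero (x : ℝ) : qpoch q x 0 = 1 := by unfold qpoch; simp
lemma qpoch_one (x : ℝ) : qpoch q x 1 = qnum q x := by unfold qpoch; simp
lemma qpoch_succ (x : ℝ) (k : ℕ) :
    qpoch q x (k + 1) = qpoch q x k * qnum q (x + k) := by
  unfold qpoch; rw [Finset.prod_range_succ]
lemma qpoch_succ' (x : ℝ) (k : ℕ) :
    qpoch q x (k + 1) = qnum q x * qpoch q (x + 1) k := by
  unfold qpoch
  rw [Finset.prod_range_succ']
  rw [mul_comm]
  congr 1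
  · norm_num
  · exact Finset.prod_congr rfl fun i _ => by push_cast; ring_nf
lemma qpoch_add (x : ℝ) (j r : ℕ) :
    qpoch q x (j + r) = qpoch q x j * qpoch q (x + j) r := by
  unfold qpoch
  rw [Finset.prod_range_add]
  congr 1
  exact Finset.prod_congr rfl fun i _ => by push_cast; ring_nf
lemma qfact_eq (k : ℕ) : qfact q k = qpoch q 1 k := by
  unfold qfact qpoch
  exact Finset.prod_congr rfl fun i _ => by rw [add_comm]
lemma qfact_succ (k : ℕ) : qfact q (k + 1) = qfact q k * qnum q ((k : ℝ) + 1) := by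
  unfold qfact; rw [Finset.prod_range_succ]
lemma qfact_ne (hq0 : 0 < q) (hq1 : q ≠ 1) (k : ℕ) : qfact q k ≠ 0 := by
  unfold qfact
  rw [Finset.prod_ne_zero_iff]
  intro i _
  exact qnum_ne hq0 hq1 (by positivity)
lemma qpoch_factor_ne {x : ℝ} {n : ℕ} (h : qpoch q x n ≠ 0) {j : ℕ} (hj : j < n) :
    qnum q (x + j) ≠ 0 := by
  unfold qpoch at h
  rw [Finset.prod_ne_zero_iff] at h
  exact h j (Finset.mem_range.mpr hj)
lemma qpoch_le_ne {x : ℝ} {n : ℕ} (h : qpoch q x n ≠ 0) {j : ℕ} (hj : j ≤ n) :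
    qpoch q x j ≠ 0 := by
  obtain ⟨r, rfl⟩ := Nat.exists_eq_add_of_le hj
  rw [qpoch_add] at h
  exact fun h0 => h (by rw [h0, zero_mul])

end Poch

section Identities
variable {q : ℝ}

set_option maxHeartbeats 1600000 in
/-- Master contiguous identity (the `s`-dependent factorization). -/
lemma master (hq0 : 0 < q) (a b α β s κ : ℝ) :
    qnum q (s + a + 1) * qnum q (b - s - 1) * qnum q (s + a - β + 1) * qnum q (b + α - s - 1) *
        qnum q (a - s) * qnum q (a + s + κ + 1) -
      qnum q (s - a) * qnum q (s + b) * qnum q (s - a + β) * qnum q (b + α + s) *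
        qnum q (a - s + κ) * qnum q (a + s + 1) =
    qnum q (2 * s + 1) *
      (-(qnum q (2 * a - 2 * b - α - β + κ + 2) * qnum q (a - s) * qnum q (a + s + 1) *
          qnum q (a - s + κ) * qnum q (a + s + κ + 1)) +
        qnum q (a - b + κ + 1) * qnum q (2 * a - β + κ + 1) * qnum q (a - b - α + κ + 1) *
          qnum q (a - s) * qnum q (a + s + 1)) := by
  simp only [qnum_eq2 hq0, ee_add hq0, ee_sub hq0, ee_two_mul hq0, ee_two hq0]
  generalize ((ee q 1 * ee q 1 - 1) / ee q 1)⁻¹ = DI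
  have h1 := ee_ne hq0 (q := q) 1
  have hs := ee_ne hq0 (q := q) s
  have ha := ee_ne hq0 (q := q) a
  have hb := ee_ne hq0 (q := q) b
  have hal := ee_ne hq0 (q := q) α
  have hbe := ee_ne hq0 (q := q) β
  have hk := ee_ne hq0 (q := q) κ
  field_simp
  ring

set_option maxHeartbeats 1600000 in
/-- The `k = 0` case of the factorization. -/
lemma msr0 (hq0 : 0 < q) (a b α β s : ℝ) :
    qnum q (s + a + 1) * qnum q (b - s - 1) * qnum q (s + a - β + 1) * qnum q (b + α - s - 1) -
      qnum q (s - a) * qnum q (s + b) * qnum q (s - a + β) * qnum q (b + α + s) =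
    qnum q (2 * s + 1) *
      (-(qnum q (2 * a - 2 * b - α - β + 2) * qnum q (a - s) * qnum q (a + s + 1)) +
        qnum q (a - b + 1) * qnum q (2 * a - β + 1) * qnum q (a - b - α + 1)) := by
  simp only [qnum_eq2 hq0, ee_add hq0, ee_sub hq0, ee_two_mul hq0, ee_two hq0]
  generalize ((ee q 1 * ee q 1 - 1) / ee q 1)⁻¹ = DI
  have h1 := ee_ne hq0 (q := q) 1
  have hs := ee_ne hq0 (q := q) s
  have ha := ee_ne hq0 (q := q) a
  have hb := ee_ne hq0 (q := q) b
  have hal := ee_ne hq0 (q := q) α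
  have hbe := ee_ne hq0 (q := q) β
  field_simp
  ring

set_option maxHeartbeats 1600000 in
/-- The three-term scalar identity (crux). -/
lemma crux (hq0 : 0 < q) (N J E : ℝ) :
    qnum q (-N) * qnum q (E + N + 1) =
      -(qnum q J * qnum q (E + J + 1)) + qnum q (J - N) * qnum q (E + N + J + 1) := by
  simp only [qnum_eq2 hq0, ee_add hq0, ee_sub hq0, ee_neg hq0, ee_two_mul hq0, ee_two hq0]
  generalize ((ee q 1 * ee q 1 - 1) / ee q 1)⁻¹ = DI
  have h1 := ee_ne hq0 (q := q) 1
  have hN := ee_ne hq0 (q := q) N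
  have hJ := ee_ne hq0 (q := q) J
  have hE := ee_ne hq0 (q := q) E
  field_simp
  ring

end Identities

section Bracket
variable {q : ℝ}

/-- Bracket factorization for every `k : ℕ`. -/
lemma bracket (hq0 : 0 < q) (a b α β s : ℝ) (k : ℕ) :
    qnum q (s + a + 1) * qnum q (b - s - 1) * qnum q (s + a - β + 1) * qnum q (b + α - s - 1) *
        (qpoch q (a - s) k * qpoch q (a + s + 2) k) -
      qnum q (s - a) * qnum q (s + b) * qnum q (s - a + β) * qnum q (b + α + s) *
        (qpoch q (a - s + 1) k * qpoch q (a + s + 1) k) =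
    qnum q (2 * s + 1) *
      (-(qnum q (2 * a - 2 * b - α - β + (k : ℝ) + 2) *
          (qpoch q (a - s) (k + 1) * qpoch q (a + s + 1) (k + 1))) +
        qnum q (a - b + (k : ℝ) + 1) * qnum q (2 * a - β + (k : ℝ) + 1) *
          qnum q (a - b - α + (k : ℝ) + 1) * (qpoch q (a - s) k * qpoch q (a + s + 1) k)) := by
  cases k with
  | zero =>
    simp only [Nat.cast_zero, add_zero, qpoch_zero, zero_add, qpoch_one]
    linear_combination msr0 hq0 a b α β s
  | succ k' =>
    push_cast
    have hM := master hq0 a b α β s ((k' : ℝ) + 1)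
    rw [show a + s + ((k' : ℝ) + 1) + 1 = a + s + 2 + (k' : ℝ) from by ring,
        show a - s + ((k' : ℝ) + 1) = a - s + 1 + (k' : ℝ) from by ring] at hM
    rw [qpoch_succ' (a - s) (k' + 1), qpoch_succ' (a + s + 1) (k' + 1),
        qpoch_succ' (a - s) k', qpoch_succ' (a + s + 1) k',
        show a + s + 1 + 1 = a + s + 2 from by ring,
        qpoch_succ (a - s + 1) k', qpoch_succ (a + s + 2) k']
    push_cast
    linear_combination (qpoch q (a - s + 1) k' * qpoch q (a + s + 2) k') * hM

end Bracket

section Coef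
variable {q : ℝ}

/-- `j = 0` coefficient identity. -/
lemma coef0 (hq0 : 0 < q) (hq1 : q ≠ 1) (a b α β : ℝ) (m : ℕ) :
    qnum q ((m : ℝ) + 1) *
      (qpoch q (a - b + 1) (m + 1) * qpoch q (2 * a - β + 1) (m + 1) *
        qpoch q (a - b - α + 1) (m + 1) / qfact q (m + 1)) =
    (qpoch q (a - b + 2) m * qpoch q (2 * a - β + 2) m * qpoch q (a - b - α + 2) m / qfact q m) *
      (qnum q (a - b + 1) * qnum q (2 * a - β + 1) * qnum q (a - b - α + 1)) := by
  rw [qpoch_succ' (a - b + 1) m, qpoch_succ' (2 * a - β + 1) m, qpoch_succ' (a - b - α + 1) m,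
      qfact_succ,
      show a - b + 1 + 1 = a - b + 2 from by ring,
      show 2 * a - β + 1 + 1 = 2 * a - β + 2 from by ring,
      show a - b - α + 1 + 1 = a - b - α + 2 from by ring]
  have h1 : qnum q ((m : ℝ) + 1) ≠ 0 := qnum_ne hq0 hq1 (by positivity)
  have h2 : qfact q m ≠ 0 := qfact_ne hq0 hq1 m
  field_simp

end Coef

section CoefId
variable {q : ℝ}

set_option maxHeartbeats 1600000 in
/-- `j = k+1` coefficient identity. -/
lemma coefid (hq0 : 0 < q) (hq1 : q ≠ 1) (a b α β : ℝ) (m k : ℕ) (hk : k ≤ m)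
    (hA : qpoch q (a - b + 1) (m + 1) ≠ 0) (hB : qpoch q (2 * a - β + 1) (m + 1) ≠ 0)
    (hC : qpoch q (a - b - α + 1) (m + 1) ≠ 0) :
    qnum q ((m : ℝ) + 1) *
      (qpoch q (a - b + 1) (m + 1) * qpoch q (2 * a - β + 1) (m + 1) *
        qpoch q (a - b - α + 1) (m + 1) / qfact q (m + 1)) *
      (qpoch q (-((m : ℝ) + 1)) (k + 1) *
        qpoch q (2 * a - 2 * b - α - β + (m : ℝ) + 2) (k + 1) /
        (qpoch q 1 (k + 1) * qpoch q (a - b + 1) (k + 1) * qpoch q (2 * a - β + 1) (k + 1) *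
          qpoch q (a - b - α + 1) (k + 1))) =
    (qpoch q (a - b + 2) m * qpoch q (2 * a - β + 2) m * qpoch q (a - b - α + 2) m /
        qfact q m) *
      (-(qpoch q (-(m : ℝ)) k * qpoch q (2 * a - 2 * b - α - β + (m : ℝ) + 3) k /
          (qpoch q 1 k * qpoch q (a - b + 2) k * qpoch q (2 * a - β + 2) k *
            qpoch q (a - b - α + 2) k) *
          qnum q (2 * a - 2 * b - α - β + (k : ℝ) + 2)) +
        qpoch q (-(m : ℝ)) (k + 1) * qpoch q (2 * a - 2 * b - α - β + (m : ℝ) + 3) (k + 1) /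
          (qpoch q 1 (k + 1) * qpoch q (a - b + 2) (k + 1) * qpoch q (2 * a - β + 2) (k + 1) *
            qpoch q (a - b - α + 2) (k + 1)) *
          (qnum q (a - b + ((k : ℝ) + 1) + 1) * qnum q (2 * a - β + ((k : ℝ) + 1) + 1) *
            qnum q (a - b - α + ((k : ℝ) + 1) + 1))) := by
  -- common decompositions (independent of k vs m case)
  have eA1 : qpoch q (a - b + 1) (m + 1) = qnum q (a - b + 1) * qpoch q (a - b + 2) m := by
    rw [qpoch_succ', show a - b + 1 + 1 = a - b + 2 from by ring]
  have eB1 : qpoch q (2 * a - β + 1) (m + 1)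
      = qnum q (2 * a - β + 1) * qpoch q (2 * a - β + 2) m := by
    rw [qpoch_succ', show 2 * a - β + 1 + 1 = 2 * a - β + 2 from by ring]
  have eC1 : qpoch q (a - b - α + 1) (m + 1)
      = qnum q (a - b - α + 1) * qpoch q (a - b - α + 2) m := by
    rw [qpoch_succ', show a - b - α + 1 + 1 = a - b - α + 2 from by ring]
  have eA2 : qpoch q (a - b + 1) (k + 1) = qnum q (a - b + 1) * qpoch q (a - b + 2) k := by
    rw [qpoch_succ', show a - b + 1 + 1 = a - b + 2 from by ring]
  have eB2 : qpoch q (2 * a - β + 1) (k + 1)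
      = qnum q (2 * a - β + 1) * qpoch q (2 * a - β + 2) k := by
    rw [qpoch_succ', show 2 * a - β + 1 + 1 = 2 * a - β + 2 from by ring]
  have eC2 : qpoch q (a - b - α + 1) (k + 1)
      = qnum q (a - b - α + 1) * qpoch q (a - b - α + 2) k := by
    rw [qpoch_succ', show a - b - α + 1 + 1 = a - b - α + 2 from by ring]
  have eN : qpoch q (-((m : ℝ) + 1)) (k + 1)
      = qnum q (-((m : ℝ) + 1)) * qpoch q (-(m : ℝ)) k := by
    rw [qpoch_succ', show -((m : ℝ) + 1) + 1 = -(m : ℝ) from by ring]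
  have eM : qpoch q (2 * a - 2 * b - α - β + (m : ℝ) + 2) (k + 1)
      = qnum q (2 * a - 2 * b - α - β + (m : ℝ) + 2) *
        qpoch q (2 * a - 2 * b - α - β + (m : ℝ) + 3) k := by
    rw [qpoch_succ',
      show 2 * a - 2 * b - α - β + (m : ℝ) + 2 + 1 = 2 * a - 2 * b - α - β + (m : ℝ) + 3 from
        by ring]
  have e1k : qpoch q 1 (k + 1) = qpoch q 1 k * qnum q ((k : ℝ) + 1) := by
    rw [qpoch_succ, add_comm 1 (k : ℝ)]
  have eF : qfact q (m + 1) = qfact q m * qnum q ((m : ℝ) + 1) := qfact_succ m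
  -- nonzero facts
  have hu : qnum q ((m : ℝ) + 1) ≠ 0 := qnum_ne hq0 hq1 (by positivity)
  have hw : qnum q ((k : ℝ) + 1) ≠ 0 := qnum_ne hq0 hq1 (by positivity)
  have hF : qfact q m ≠ 0 := qfact_ne hq0 hq1 m
  have hKf : qpoch q 1 k ≠ 0 := by rw [← qfact_eq]; exact qfact_ne hq0 hq1 k
  have hAn : qnum q (a - b + 1) ≠ 0 := by
    intro h; exact hA (by rw [eA1, h, zero_mul])
  have hBn : qnum q (2 * a - β + 1) ≠ 0 := by
    intro h; exact hB (by rw [eB1, h, zero_mul])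
  have hCn : qnum q (a - b - α + 1) ≠ 0 := by
    intro h; exact hC (by rw [eC1, h, zero_mul])
  have hPA : qpoch q (a - b + 2) m ≠ 0 := by
    intro h; exact hA (by rw [eA1, h, mul_zero])
  have hPB : qpoch q (2 * a - β + 2) m ≠ 0 := by
    intro h; exact hB (by rw [eB1, h, mul_zero])
  have hPC : qpoch q (a - b - α + 2) m ≠ 0 := by
    intro h; exact hC (by rw [eC1, h, mul_zero])
  have hPAk : qpoch q (a - b + 2) k ≠ 0 := qpoch_le_ne hPA hk
  have hPBk : qpoch q (2 * a - β + 2) k ≠ 0 := qpoch_le_ne hPB hk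
  have hPCk : qpoch q (a - b - α + 2) k ≠ 0 := qpoch_le_ne hPC hk
  rcases Nat.lt_or_ge k m with hkm | hkm
  · -- case k < m
    obtain ⟨r, hr⟩ : ∃ r, m = (k + 1) + r := ⟨m - (k + 1), by omega⟩
    -- decompose the (·)ₘ pochhammers
    have dA : qpoch q (a - b + 2) m
        = qpoch q (a - b + 2) k * qnum q (a - b + 2 + (k : ℝ)) *
          qpoch q (a - b + 2 + ((k : ℝ) + 1)) r := by
      rw [hr, qpoch_add, qpoch_succ]; push_cast; ring_nf
    have dB : qpoch q (2 * a - β + 2) m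
        = qpoch q (2 * a - β + 2) k * qnum q (2 * a - β + 2 + (k : ℝ)) *
          qpoch q (2 * a - β + 2 + ((k : ℝ) + 1)) r := by
      rw [hr, qpoch_add, qpoch_succ]; push_cast; ring_nf
    have dC : qpoch q (a - b - α + 2) m
        = qpoch q (a - b - α + 2) k * qnum q (a - b - α + 2 + (k : ℝ)) *
          qpoch q (a - b - α + 2 + ((k : ℝ) + 1)) r := by
      rw [hr, qpoch_add, qpoch_succ]; push_cast; ring_nf
    have hfA : qnum q (a - b + 2 + (k : ℝ)) ≠ 0 := by
      intro h; exact hPA (by rw [dA, h]; ring)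
    have hfB : qnum q (2 * a - β + 2 + (k : ℝ)) ≠ 0 := by
      intro h; exact hPB (by rw [dB, h]; ring)
    have hfC : qnum q (a - b - α + 2 + (k : ℝ)) ≠ 0 := by
      intro h; exact hPC (by rw [dC, h]; ring)
    -- succ decompositions at k+1 for the second RHS term
    have eNk : qpoch q (-(m : ℝ)) (k + 1)
        = qpoch q (-(m : ℝ)) k * qnum q ((k : ℝ) - (m : ℝ)) := by
      rw [qpoch_succ, show -(m : ℝ) + (k : ℝ) = (k : ℝ) - (m : ℝ) from by ring]
    have eMk : qpoch q (2 * a - 2 * b - α - β + (m : ℝ) + 3) (k + 1)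
        = qpoch q (2 * a - 2 * b - α - β + (m : ℝ) + 3) k *
          qnum q (2 * a - 2 * b - α - β + (m : ℝ) + 3 + (k : ℝ)) := by
      rw [qpoch_succ]
    have eA3 : qpoch q (a - b + 2) (k + 1)
        = qpoch q (a - b + 2) k * qnum q (a - b + 2 + (k : ℝ)) := by rw [qpoch_succ]
    have eB3 : qpoch q (2 * a - β + 2) (k + 1)
        = qpoch q (2 * a - β + 2) k * qnum q (2 * a - β + 2 + (k : ℝ)) := by rw [qpoch_succ]
    have eC3 : qpoch q (a - b - α + 2) (k + 1)
        = qpoch q (a - b - α + 2) k * qnum q (a - b - α + 2 + (k : ℝ)) := by rw [qpoch_succ]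
    -- crux instance
    have hX := crux hq0 ((m : ℝ) + 1) ((k : ℝ) + 1) (2 * a - 2 * b - α - β)
    rw [show 2 * a - 2 * b - α - β + ((m : ℝ) + 1) + 1
          = 2 * a - 2 * b - α - β + (m : ℝ) + 2 from by ring,
        show 2 * a - 2 * b - α - β + ((k : ℝ) + 1) + 1
          = 2 * a - 2 * b - α - β + (k : ℝ) + 2 from by ring,
        show (k : ℝ) + 1 - ((m : ℝ) + 1) = (k : ℝ) - (m : ℝ) from by ring,
        show 2 * a - 2 * b - α - β + ((m : ℝ) + 1) + ((k : ℝ) + 1) + 1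
          = 2 * a - 2 * b - α - β + (m : ℝ) + 3 + (k : ℝ) from by ring,
        qnum_neg hq0 ((m : ℝ) + 1)] at hX
    -- λ arguments
    rw [show a - b + ((k : ℝ) + 1) + 1 = a - b + 2 + (k : ℝ) from by ring,
        show 2 * a - β + ((k : ℝ) + 1) + 1 = 2 * a - β + 2 + (k : ℝ) from by ring,
        show a - b - α + ((k : ℝ) + 1) + 1 = a - b - α + 2 + (k : ℝ) from by ring,
        eA1, eB1, eC1, eA2, eB2, eC2, eN, eM, e1k, eF, eNk, eMk, eA3, eB3, eC3, dA, dB, dC,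
        qnum_neg hq0 ((m : ℝ) + 1)]
    linear_combination (norm := skip) (qpoch q (a - b + 2) m * qpoch q (2 * a - β + 2) m *
        qpoch q (a - b - α + 2) m / qfact q m * (qpoch q (-(m : ℝ)) k *
        qpoch q (2 * a - 2 * b - α - β + (m : ℝ) + 3) k / (qpoch q 1 k * qpoch q (a - b + 2) k *
        qpoch q (2 * a - β + 2) k * qpoch q (a - b - α + 2) k * qnum q ((k : ℝ) + 1)))) * hX
    rw [dA, dB, dC]
    rw [mul_comm 2 a] at hBn hPBk hfB
    field_simp
    ring
  · -- case k = m
    have hkm' : k = m := le_antisymm hk hkm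
    subst hkm'
    have hD0 : qpoch q (-(k : ℝ)) (k + 1) = 0 := by
      rw [qpoch_succ, show -(k : ℝ) + (k : ℝ) = 0 from by ring, qnum_zero, mul_zero]
    rw [hD0, zero_mul, zero_div, zero_mul, add_zero,
        eA1, eB1, eC1, eN, eM, e1k, eF, qnum_neg hq0 ((k : ℝ) + 1)]
    rw [mul_comm 2 a] at hBn hPB
    field_simp

theorem stmt_16 (q : ℝ) (hq0 : 0 < q) (hq1 : q ≠ 1) (n : ℕ) (hn : 1 ≤ n) (a b α β : ℝ)
    (hnz : qpoch q (a - b + 1) n * qpoch q (2 * a - β + 1) n *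
      qpoch q (a - b - α + 1) n ≠ 0) :
    ∀ s : ℝ,
      qnum q (n : ℝ) * qnum q (2 * s + 1) * racahUt q a b α β n s =
        racahSigmaTM q a b α β s *
            racahUt q (a + 1 / 2) (b - 1 / 2) α β (n - 1) (s + 1 / 2) -
          racahSigmaT q a b α β s *
            racahUt q (a + 1 / 2) (b - 1 / 2) α β (n - 1) (s - 1 / 2) := by
  have hAB := mul_ne_zero_iff.mp hnz
  have hAB2 := mul_ne_zero_iff.mp hAB.1
  intro s
  obtain ⟨m, rfl⟩ : ∃ m, n = m + 1 := ⟨n - 1, by omega⟩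
  have hA := hAB2.1
  have hB := hAB2.2
  have hC := hAB.2
  simp only [racahUt, racahSigmaTM, racahSigmaT, Nat.add_sub_cancel]
  push_cast
  simp only [show a + 1 / 2 - (b - 1 / 2) + 1 = a - b + 2 from by ring,
             show 2 * (a + 1 / 2) - β + 1 = 2 * a - β + 2 from by ring,
             show a + 1 / 2 - (b - 1 / 2) - α + 1 = a - b - α + 2 from by ring,
             show 2 * (a + 1 / 2) - 2 * (b - 1 / 2) - α - β + (m : ℝ) + 1
               = 2 * a - 2 * b - α - β + (m : ℝ) + 3 from by ring,
             show a + 1 / 2 - (s + 1 / 2) = a - s from by ring,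
             show a + 1 / 2 + (s + 1 / 2) + 1 = a + s + 2 from by ring,
             show a + 1 / 2 - (s - 1 / 2) = a - s + 1 from by ring,
             show a + 1 / 2 + (s - 1 / 2) + 1 = a + s + 1 from by ring,
             show 2 * a - 2 * b - α - β + ((m : ℝ) + 1) + 1
               = 2 * a - 2 * b - α - β + (m : ℝ) + 2 from by ring]
  have hYtop : ((qpoch q (-(m : ℝ)) (m + 1) * qpoch q (2 * a - 2 * b - α - β + (m : ℝ) + 3) (m + 1) / (qpoch q 1 (m + 1) * qpoch q (a - b + 2) (m + 1) * qpoch q (2 * a - β + 2) (m + 1) * qpoch q (a - b - α + 2) (m + 1))) * (qnum q (a - b + ((m + 1 : ℕ) : ℝ) + 1) * qnum q (2 * a - β + ((m + 1 : ℕ) : ℝ) + 1) * qnum q (a - b - α + ((m + 1 : ℕ) : ℝ) + 1)) * (qpoch q (a - s) (m + 1) * qpoch q (a + s + 1) (m + 1))) = 0 := by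
    have h0 : qpoch q (-(m : ℝ)) (m + 1) = 0 := by
      rw [qpoch_succ, show -(m : ℝ) + (m : ℝ) = 0 from by ring, qnum_zero, mul_zero]
    rw [h0]
    simp
  have hsplit : ∑ k ∈ Finset.range (m + 1), (-((qpoch q (-(m : ℝ)) (k) * qpoch q (2 * a - 2 * b - α - β + (m : ℝ) + 3) (k) / (qpoch q 1 (k) * qpoch q (a - b + 2) (k) * qpoch q (2 * a - β + 2) (k) * qpoch q (a - b - α + 2) (k))) * qnum q (2 * a - 2 * b - α - β + ((k : ℕ) : ℝ) + 2) * (qpoch q (a - s) (k + 1) * qpoch q (a + s + 1) (k + 1))) + ((qpoch q (-(m : ℝ)) (k) * qpoch q (2 * a - 2 * b - α - β + (m : ℝ) + 3) (k) / (qpoch q 1 (k) * qpoch q (a - b + 2) (k) * qpoch q (2 * a - β + 2) (k) * qpoch q (a - b - α + 2) (k))) * (qnum q (a - b + ((k : ℕ) : ℝ) + 1) * qnum q (2 * a - β + ((k : ℕ) : ℝ) + 1) * qnum q (a - b - α + ((k : ℕ) : ℝ) + 1)) * (qpoch q (a - s) (k) * qpoch q (a + s + 1) (k)))) =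
      ∑ k ∈ Finset.range (m + 1), (-((qpoch q (-(m : ℝ)) (k) * qpoch q (2 * a - 2 * b - α - β + (m : ℝ) + 3) (k) / (qpoch q 1 (k) * qpoch q (a - b + 2) (k) * qpoch q (2 * a - β + 2) (k) * qpoch q (a - b - α + 2) (k))) * qnum q (2 * a - 2 * b - α - β + ((k : ℕ) : ℝ) + 2) * (qpoch q (a - s) (k + 1) * qpoch q (a + s + 1) (k + 1)))) +
        ((∑ k ∈ Finset.range (m + 1), ((qpoch q (-(m : ℝ)) (k + 1) * qpoch q (2 * a - 2 * b - α - β + (m : ℝ) + 3) (k + 1) / (qpoch q 1 (k + 1) * qpoch q (a - b + 2) (k + 1) * qpoch q (2 * a - β + 2) (k + 1) * qpoch q (a - b - α + 2) (k + 1))) * (qnum q (a - b + ((k + 1 : ℕ) : ℝ) + 1) * qnum q (2 * a - β + ((k + 1 : ℕ) : ℝ) + 1) * qnum q (a - b - α + ((k + 1 : ℕ) : ℝ) + 1)) * (qpoch q (a - s) (k + 1) * qpoch q (a + s + 1) (k + 1)))) + ((qpoch q (-(m : ℝ)) (0) * qpoch q (2 * a - 2 * b - α - β + (m : ℝ) +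 3) (0) / (qpoch q 1 (0) * qpoch q (a - b + 2) (0) * qpoch q (2 * a - β + 2) (0) * qpoch q (a - b - α + 2) (0))) * (qnum q (a - b + ((0 : ℕ) : ℝ) + 1) * qnum q (2 * a - β + ((0 : ℕ) : ℝ) + 1) * qnum q (a - b - α + ((0 : ℕ) : ℝ) + 1)) * (qpoch q (a - s) (0) * qpoch q (a + s + 1) (0)))) := by
    rw [Finset.sum_add_distrib]
    congr 1
    have hext : ∑ k ∈ Finset.range (m + 1 + 1), ((qpoch q (-(m : ℝ)) (k) * qpoch q (2 * a - 2 * b - α - β + (m : ℝ) + 3) (k) / (qpoch q 1 (k) * qpoch q (a - b + 2) (k) * qpoch q (2 * a - β + 2) (k) * qpoch q (a - b - α + 2) (k))) * (qnum q (a - b + ((k : ℕ) : ℝ) + 1) * qnum q (2 * a - β + ((k : ℕ) : ℝ) + 1) * qnum q (a - b - α + ((k : ℕ) : ℝ) + 1)) * (qpoch q (a - s) (k) * qpoch q (a + s + 1) (k))) =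
        ∑ k ∈ Finset.range (m + 1), ((qpoch q (-(m : ℝ)) (k) * qpoch q (2 * a - 2 * b - α - β + (m : ℝ) + 3) (k) / (qpoch q 1 (k) * qpoch q (a - b + 2) (k) * qpoch q (2 * a - β + 2) (k) * qpoch q (a - b - α + 2) (k))) * (qnum q (a - b + ((k : ℕ) : ℝ) + 1) * qnum q (2 * a - β + ((k : ℕ) : ℝ) + 1) * qnum q (a - b - α + ((k : ℕ) : ℝ) + 1)) * (qpoch q (a - s) (k) * qpoch q (a + s + 1) (k))) := by
      rw [Finset.sum_range_succ, hYtop, add_zero]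
    rw [← hext, Finset.sum_range_succ']
  have key : qnum q ((m : ℝ) + 1) * ((qpoch q (a - b + 1) (m + 1) * qpoch q (2 * a - β + 1) (m + 1) * qpoch q (a - b - α + 1) (m + 1) / qfact q (m + 1)) * ∑ k ∈ Finset.range (m + 1 + 1), (qpoch q (-((m : ℝ) + 1)) (k) * qpoch q (2 * a - 2 * b - α - β + (m : ℝ) + 2) (k) * qpoch q (a - s) (k) * qpoch q (a + s + 1) (k) / (qpoch q 1 (k) * qpoch q (a - b + 1) (k) * qpoch q (2 * a - β + 1) (k) * qpoch q (a - b - α + 1) (k)))) =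
      (qpoch q (a - b + 2) m * qpoch q (2 * a - β + 2) m * qpoch q (a - b - α + 2) m / qfact q m) * ∑ k ∈ Finset.range (m + 1), (-((qpoch q (-(m : ℝ)) (k) * qpoch q (2 * a - 2 * b - α - β + (m : ℝ) + 3) (k) / (qpoch q 1 (k) * qpoch q (a - b + 2) (k) * qpoch q (2 * a - β + 2) (k) * qpoch q (a - b - α + 2) (k))) * qnum q (2 * a - 2 * b - α - β + ((k : ℕ) : ℝ) + 2) * (qpoch q (a - s) (k + 1) * qpoch q (a + s + 1) (k + 1))) + ((qpoch q (-(m : ℝ)) (k) * qpoch q (2 * a - 2 * b - α - β + (m : ℝ) + 3) (k) / (qpoch q 1 (k) * qpoch q (a - b + 2) (k) * qpoch q (2 * a - β + 2) (k) * qpoch q (a - b - α + 2) (k))) * (qnum q (a - b + ((k : ℕ) : ℝ) + 1) * qnum q (2 * a - β + ((k : ℕ) : ℝ) + 1) * qnum q (a - b - α + ((k : ℕ) : ℝ) + 1)) * (qpoch q (a - s) (k) * qpoch q (a + s + 1) (k)))) := by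
    rw [hsplit, Finset.mul_sum, Finset.mul_sum, Finset.sum_range_succ',
        mul_add, mul_add, Finset.mul_sum, Finset.mul_sum, ← add_assoc,
        ← Finset.sum_add_distrib]
    congr 1
    · apply Finset.sum_congr rfl
      intro k hk
      have hkm : k ≤ m := by
        have := Finset.mem_range.mp hk
        omega
      have hco := coefid hq0 hq1 a b α β m k hkm hA hB hC
      push_cast
      linear_combination (qpoch q (a - s) (k + 1) * qpoch q (a + s + 1) (k + 1)) * hco
    · have hco := coef0 hq0 hq1 a b α β m
      simp only [qpoch_zero, Nat.cast_zero, add_zero, mul_one, one_mul, div_one, zero_add]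
      linear_combination hco
  have step1 : qnum q (s + a + 1) * qnum q (b - s - 1) * qnum q (s + a - β + 1) * qnum q (b + α - s - 1) * ((qpoch q (a - b + 2) m * qpoch q (2 * a - β + 2) m * qpoch q (a - b - α + 2) m / qfact q m) * ∑ k ∈ Finset.range (m + 1), (qpoch q (-(m : ℝ)) (k) * qpoch q (2 * a - 2 * b - α - β + (m : ℝ) + 3) (k) * qpoch q (a - s) (k) * qpoch q (a + s + 2) (k) / (qpoch q 1 (k) * qpoch q (a - b + 2) (k) * qpoch q (2 * a - β + 2) (k) * qpoch q (a - b - α + 2) (k)))) -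
      qnum q (s - a) * qnum q (s + b) * qnum q (s - a + β) * qnum q (b + α + s) * ((qpoch q (a - b + 2) m * qpoch q (2 * a - β + 2) m * qpoch q (a - b - α + 2) m / qfact q m) * ∑ k ∈ Finset.range (m + 1), (qpoch q (-(m : ℝ)) (k) * qpoch q (2 * a - 2 * b - α - β + (m : ℝ) + 3) (k) * qpoch q (a - s + 1) (k) * qpoch q (a + s + 1) (k) / (qpoch q 1 (k) * qpoch q (a - b + 2) (k) * qpoch q (2 * a - β + 2) (k) * qpoch q (a - b - α + 2) (k)))) =
      (qpoch q (a - b + 2) m * qpoch q (2 * a - β + 2) m * qpoch q (a - b - α + 2) m / qfact q m) * (qnum q (2 * s + 1) * ∑ k ∈ Finset.range (m + 1), (-((qpoch q (-(m : ℝ)) (k) * qpoch q (2 * a - 2 * b - α - β + (m : ℝ) + 3) (k) / (qpoch q 1 (k) * qpoch q (a - b + 2) (k) * qpoch q (2 * a - β + 2) (k) * qpoch q (a - b - α + 2) (k))) * qnum q (2 * a - 2 * b - α - β + ((k : ℕ) : ℝ) + 2) * (qpoch q (a - s) (k + 1) * qpoch q (a + s + 1) (k + 1))) + ((qpoch q (-(m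 : ℝ)) (k) * qpoch q (2 * a - 2 * b - α - β + (m : ℝ) + 3) (k) / (qpoch q 1 (k) * qpoch q (a - b + 2) (k) * qpoch q (2 * a - β + 2) (k) * qpoch q (a - b - α + 2) (k))) * (qnum q (a - b + ((k : ℕ) : ℝ) + 1) * qnum q (2 * a - β + ((k : ℕ) : ℝ) + 1) * qnum q (a - b - α + ((k : ℕ) : ℝ) + 1)) * (qpoch q (a - s) (k) * qpoch q (a + s + 1) (k))))) := by
    simp only [Finset.mul_sum]
    rw [← Finset.sum_sub_distrib]
    apply Finset.sum_congr rfl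
    intro k hk
    have hbr := bracket hq0 a b α β s k
    push_cast
    linear_combination ((qpoch q (a - b + 2) m * qpoch q (2 * a - β + 2) m * qpoch q (a - b - α + 2) m / qfact q m) * (qpoch q (-(m : ℝ)) (k) * qpoch q (2 * a - 2 * b - α - β + (m : ℝ) + 3) (k) / (qpoch q 1 (k) * qpoch q (a - b + 2) (k) * qpoch q (2 * a - β + 2) (k) * qpoch q (a - b - α + 2) (k)))) * hbr
  rw [step1]
  linear_combination qnum q (2 * s + 1) * key
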